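/- Let (Ω, μ) be a probability space, T ≥ 1 a natural number, C a real, V > 0, B, Δ reals, and q₀ ≥ 0 a real. Let u, c, û, ĉ : ℕ → Ω → ℝ and q : ℕ → Ω → ℝ be such that for every t < T the functions u(t), û(t), q(t)·c(t), q(t)·ĉ(t), q(t) are integrable, q(0)(ω) = q₀ for all ω, and for μ-almost every ω and every t < T: (i) q(t+1)(ω) = max(0, q(t)(ω) + c(t)(ω) - C/T), (ii) ½(q(t+1)(ω)^2 - q(t)(ω)^2) ≤ q(t)(ω)·(c(t)(ω) - C/T) + B, and (iii) V·u(t)(ω) - q(t)(ω)·c(t)(ω) ≥ V·û(t)(ω) - q(t)(ω)·ĉ(t)(ω) - Δ. Suppose moreover that ∫ q(t)·(C/T - ĉ(t)) dμ = 0 for every t < T. Then (1/T)·∑_{t=0}^{T-1} ∫ u(t) dμ ≥ (1/T)·∑_{t=0}^{T-1} ∫ û(t) dμ - (Δ + B)/V - q₀^2/(2·V·T). -/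

import Mathlib

open MeasureTheory

/-- Theorem 2 of the paper: with Δ-optimal per-slot solutions, the expected
time-averaged online utility is within `(Δ+B)/V + q₀²/(2VT)` of the expected
offline optimum. -/
theorem theorem2_expected {Ω : Type*} [MeasurableSpace Ω] (μ : Measure Ω)
    [IsProbabilityMeasure μ]
    (T : ℕ) (hT : 1 ≤ T) (C : ℝ) (V : ℝ) (hV : 0 < V) (B Δ : ℝ) (q₀ : ℝ) (hq₀ : 0 ≤ q₀)
    (u c uhat chat : ℕ → Ω → ℝ) (q : ℕ → Ω → ℝ)
    (hint_u : ∀ t < T, Integrable (u t) μ)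
    (hint_uhat : ∀ t < T, Integrable (uhat t) μ)
    (hint_qc : ∀ t < T, Integrable (fun ω => q t ω * c t ω) μ)
    (hint_qchat : ∀ t < T, Integrable (fun ω => q t ω * chat t ω) μ)
    (hint_q : ∀ t < T, Integrable (q t) μ)
    (hq0 : ∀ ω, q 0 ω = q₀)
    (hae : ∀ᵐ ω ∂μ, ∀ t < T,
      q (t + 1) ω = max 0 (q t ω + c t ω - C / T) ∧
      (1 / 2) * (q (t + 1) ω ^ 2 - q t ω ^ 2) ≤ q t ω * (c t ω - C / T) + B ∧
      V * u t ω - q t ω * c t ω ≥ V * uhat t ω - q t ω * chat t ω - Δ)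
    (hindep : ∀ t < T, ∫ ω, q t ω * (C / T - chat t ω) ∂μ = 0) :
    (1 / T) * ∑ t ∈ Finset.range T, ∫ ω, u t ω ∂μ
      ≥ (1 / T) * ∑ t ∈ Finset.range T, ∫ ω, uhat t ω ∂μ
        - (Δ + B) / V - q₀ ^ 2 / (2 * V * T) := by
  have hT' : (0:ℝ) < T := by exact_mod_cast hT
  -- integrability of q t * (C/T - chat t)
  have hint_qd : ∀ t < T, Integrable (fun ω => q t ω * (C / T - chat t ω)) μ := by
    intro t ht
    have h1 : (fun ω => q t ω * (C / T - chat t ω))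
        = fun ω => q t ω * (C / T) - q t ω * chat t ω := by
      funext ω; ring
    rw [h1]
    exact ((hint_q t ht).mul_const _).sub (hint_qchat t ht)
  have hint_term : ∀ t ∈ Finset.range T,
      Integrable (fun ω => V * uhat t ω + q t ω * (C / T - chat t ω)) μ := by
    intro t ht
    exact ((hint_uhat t (Finset.mem_range.mp ht)).const_mul V).add
      (hint_qd t (Finset.mem_range.mp ht))
  -- pointwise a.e. bound
  have hae2 : ∀ᵐ ω ∂μ,
      (∑ t ∈ Finset.range T, (V * uhat t ω + q t ω * (C / T - chat t ω)))
        - q₀ ^ 2 / 2 - (T:ℝ) * (B + Δ)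
      ≤ ∑ t ∈ Finset.range T, V * u t ω := by
    filter_upwards [hae] with ω hω
    have tele : ∑ t ∈ Finset.range T, (q (t+1) ω ^2 / 2 - q t ω ^2 / 2)
        = q T ω ^2 / 2 - q 0 ω ^2 / 2 :=
      Finset.sum_range_sub (fun t => q t ω ^2 / 2) T
    have hstep : ∀ t ∈ Finset.range T,
        (V * uhat t ω + q t ω * (C / T - chat t ω))
          + (q (t+1) ω ^2 / 2 - q t ω ^2 / 2) - (B + Δ)
        ≤ V * u t ω := by
      intro t ht
      obtain ⟨h1, h2, h3⟩ := hω t (Finset.mem_range.mp ht)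
      nlinarith [h2, h3]
    have hsum := Finset.sum_le_sum hstep
    rw [Finset.sum_sub_distrib, Finset.sum_add_distrib, tele, Finset.sum_const,
      Finset.card_range, hq0 ω] at hsum
    simp only [nsmul_eq_mul] at hsum
    have hqT : 0 ≤ q T ω ^ 2 / 2 := by positivity
    linarith
  -- integrability of both sides
  have hintR : Integrable (fun ω => ∑ t ∈ Finset.range T, V * u t ω) μ := by
    apply integrable_finset_sum
    intro t ht
    exact (hint_u t (Finset.mem_range.mp ht)).const_mul V
  have hA : Integrable (fun ω =>
      ∑ t ∈ Finset.range T, (V * uhat t ω + q t ω * (C / T - chat t ω))) μ :=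
    integrable_finset_sum _ hint_term
  have hA2 : Integrable (fun ω =>
      (∑ t ∈ Finset.range T, (V * uhat t ω + q t ω * (C / T - chat t ω)))
        - q₀ ^ 2 / 2) μ := hA.sub (integrable_const _)
  have hintL : Integrable (fun ω =>
      (∑ t ∈ Finset.range T, (V * uhat t ω + q t ω * (C / T - chat t ω)))
        - q₀ ^ 2 / 2 - (T:ℝ) * (B + Δ)) μ := hA2.sub (integrable_const _)
  have hInt := integral_mono_ae hintL hintR hae2
  rw [integral_finset_sum _ (fun t ht =>
      (hint_u t (Finset.mem_range.mp ht)).const_mul V)] at hInt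
  rw [integral_sub hA2 (integrable_const _), integral_sub hA (integrable_const _),
    integral_finset_sum _ hint_term] at hInt
  simp only [integral_const, probReal_univ, measure_univ, ENNReal.toReal_one, one_smul,
    smul_eq_mul] at hInt
  have hsum_eq : ∀ t ∈ Finset.range T,
      ∫ ω, (V * uhat t ω + q t ω * (C / T - chat t ω)) ∂μ
        = V * ∫ ω, uhat t ω ∂μ := by
    intro t ht
    have ht' := Finset.mem_range.mp ht
    rw [integral_add ((hint_uhat t ht').const_mul V) (hint_qd t ht'),
      hindep t ht', integral_const_mul, add_zero]
  rw [Finset.sum_congr rfl hsum_eq] at hInt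
  simp only [integral_const_mul] at hInt
  rw [← Finset.mul_sum, ← Finset.mul_sum] at hInt
  set Su := ∑ t ∈ Finset.range T, ∫ ω, u t ω ∂μ
  set Sh := ∑ t ∈ Finset.range T, ∫ ω, uhat t ω ∂μ
  rw [ge_iff_le, ← sub_nonneg]
  have heq : (1/(T:ℝ))*Su - ((1/(T:ℝ))*Sh - (Δ+B)/V - q₀^2/(2*V*(T:ℝ)))
      = ((V*Su) - (V*Sh - q₀^2/2 - (T:ℝ)*(B+Δ)))/(V*(T:ℝ)) := by
    field_simp
    ring
  rw [heq]
  apply div_nonneg (by linarith) (by positivity)
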